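/- Let E be a finite-dimensional real inner product space, (Ω, 𝔉, ℙ) a probability space with filtration (ℱ_k), x* ∈ E, x₀ ∈ E deterministic. Let F : E → E satisfy F(x*) = 0 and ‖F(y) − F(z)‖ ≤ C·‖y − z‖ for all y, z. Let V : E → ℝ be nonnegative and differentiable with: V(z) ≤ V(y) + ⟪∇V(y), z − y⟫ + (L/2)·‖z − y‖² for all y, z (L > 0); ⟪∇V(y), F(y)⟫ ≤ −γ·V(y) for all y (γ > 0); and C₁·‖y − x*‖² ≤ V(y) ≤ C₂·‖y − x*‖² for all y (C₁, C₂ > 0). Let (x_k) be adapted and square-integrable with x_{k+1} = x_k + α·(F(x_k) + w_k), where α > 0 is constant, and (w_k) are square-integrable with 𝔼[w_k | ℱ_k] = 0 a.s. and 𝔼[‖w_k‖² | ℱ_k] ≤ A + B·‖x_k‖² a.s. (A, B ≥ 0). Assume α·L·(C² + 2B)/C₁ ≤ γ/2 and α·γ ≤ 2. Then for every k, 𝔼[‖x_k − x*‖²] ≤ (C₂/C₁)·‖x₀ − x*‖²·(1 − αγ/2)^k + 2αL·(A + 2B‖x*‖²)/(γ·C₁). -/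

import Mathlib

open MeasureTheory RealInnerProductSpace

section Helpers
variable {Ω : Type*} {m m0 : MeasurableSpace Ω} {P : Measure Ω}
    [IsProbabilityMeasure P]
    {E : Type*} [NormedAddCommGroup E] [InnerProductSpace ℝ E] [FiniteDimensional ℝ E]

omit [IsProbabilityMeasure P] [FiniteDimensional ℝ E] in
lemma myIntegrable_inner {f g : Ω → E} (hf : MemLp f 2 P) (hg : MemLp g 2 P) :
    Integrable (fun ω => ⟪f ω, g ω⟫) P := by
  have h := L2.integrable_inner (𝕜 := ℝ) (hf.toLp f) (hg.toLp g)
  refine h.congr ?_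
  filter_upwards [hf.coeFn_toLp, hg.coeFn_toLp] with ω h1 h2
  rw [h1, h2]

omit [FiniteDimensional ℝ E] in
lemma condexp_clm_zero [CompleteSpace E] (hm : m ≤ m0)
    (T : E →L[ℝ] ℝ) {h : Ω → E} (hh : Integrable h P) (hmean : P[h|m] =ᵐ[P] 0) :
    P[fun ω => T (h ω)|m] =ᵐ[P] 0 := by
  refine (ae_eq_condExp_of_forall_setIntegral_eq hm (T.integrable_comp hh)
    (fun s _ _ => (integrable_zero _ _ _).integrableOn) (fun s hs _ => ?_) ?_).symm
  · have h1 : ∫ ω in s, T (h ω) ∂P = T (∫ ω in s, h ω ∂P) :=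
      (T.integral_comp_comm hh.integrableOn)
    have h2 : ∫ ω in s, h ω ∂P = ∫ ω in s, (P[h|m]) ω ∂P :=
      (setIntegral_condExp hm hh hs).symm
    have h3 : ∫ ω in s, (P[h|m]) ω ∂P = ∫ ω in s, (0 : E) ∂P :=
      setIntegral_congr_ae (hm s hs) (hmean.mono fun ω hω _ => hω)
    simp [h1, h2, h3]
  · exact StronglyMeasurable.aestronglyMeasurable (by exact stronglyMeasurable_const)

lemma integral_inner_zero_mean [MeasurableSpace E] [BorelSpace E] (hm : m ≤ m0)
    {g h : Ω → E} (hgm : StronglyMeasurable[m] g) (hgL2 : MemLp g 2 P)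
    (hhL2 : MemLp h 2 P) (hmean : P[h|m] =ᵐ[P] 0) :
    ∫ ω, ⟪g ω, h ω⟫ ∂P = 0 := by
  classical
  set b := stdOrthonormalBasis ℝ E
  have key : ∀ ω, ⟪g ω, h ω⟫ = ∑ i, ⟪g ω, b i⟫ * ⟪b i, h ω⟫ := fun ω =>
    (b.sum_inner_mul_inner _ _).symm
  have hint : ∀ i : Fin (Module.finrank ℝ E),
      Integrable (fun ω => ⟪g ω, b i⟫ * ⟪b i, h ω⟫) P := by
    intro i
    have := myIntegrable_inner (E := ℝ) (hgL2.inner_const (b i)) (hhL2.const_inner (b i))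
    simpa [RCLike.inner_apply, mul_comm] using this
  calc ∫ ω, ⟪g ω, h ω⟫ ∂P = ∫ ω, ∑ i, ⟪g ω, b i⟫ * ⟪b i, h ω⟫ ∂P := by
        simp_rw [key]
    _ = ∑ i, ∫ ω, ⟪g ω, b i⟫ * ⟪b i, h ω⟫ ∂P := integral_finset_sum _ fun i _ => hint i
    _ = 0 := by
        refine Finset.sum_eq_zero fun i _ => ?_
        have hgim : StronglyMeasurable[m] fun ω => ⟪g ω, b i⟫ :=
          hgm.inner stronglyMeasurable_const
        have hhi : Integrable (fun ω => ⟪b i, h ω⟫) P :=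
          (hhL2.integrable one_le_two).const_inner _
        have hczero : P[fun ω => ⟪b i, h ω⟫|m] =ᵐ[P] 0 :=
          condexp_clm_zero hm (innerSL ℝ (b i)) (hhL2.integrable one_le_two) hmean
        have hpull : P[(fun ω => ⟪g ω, b i⟫) * (fun ω => ⟪b i, h ω⟫)|m]
            =ᵐ[P] (fun ω => ⟪g ω, b i⟫) * P[fun ω => ⟪b i, h ω⟫|m] :=
          condExp_mul_of_stronglyMeasurable_left hgim (by exact hint i) hhi
        have heq : ∫ ω, ⟪g ω, b i⟫ * ⟪b i, h ω⟫ ∂P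
            = ∫ ω, (P[(fun ω => ⟪g ω, b i⟫) * (fun ω => ⟪b i, h ω⟫)|m]) ω ∂P :=
          (integral_condExp hm).symm
        have hzero2 : (fun ω => ⟪g ω, b i⟫) * P[fun ω => ⟪b i, h ω⟫|m]
            =ᵐ[P] fun _ => (0:ℝ) := by
          filter_upwards [hczero] with ω hω
          simp [Pi.mul_apply, hω]
        rw [heq, integral_congr_ae (hpull.trans hzero2)]
        simp

end Helpers

lemma geo_rec (e : ℕ → ℝ) (q c : ℝ) (hq0 : 0 ≤ q) (hq1 : q < 1) (hc : 0 ≤ c)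
    (h : ∀ k, e (k + 1) ≤ q * e k + c) :
    ∀ k, e k ≤ q ^ k * e 0 + c / (1 - q) := by
  intro k; induction k with
  | zero => simp [div_nonneg hc (by linarith : (0:ℝ) ≤ 1 - q)]
  | succ k ih =>
    have h1q : 0 < 1 - q := by linarith
    have h2 : q * e k ≤ q * (q ^ k * e 0 + c / (1 - q)) :=
      mul_le_mul_of_nonneg_left ih hq0
    have h3 : q * (c / (1 - q)) + c = c / (1 - q) := by field_simp; ring
    calc e (k + 1) ≤ q * e k + c := h k
      _ ≤ q * (q ^ k * e 0 + c / (1 - q)) + c := by linarith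
      _ = q ^ (k + 1) * e 0 + (q * (c / (1 - q)) + c) := by ring
      _ = q ^ (k + 1) * e 0 + c / (1 - q) := by rw [h3]


set_option maxHeartbeats 1000000 in
/-- constant-stepsize finite-time bound, smooth exponentially stable case:
the iterates of `x_{k+1} = x_k + α (F(x_k) + w_k)` converge exponentially fast in mean square
to a ball of radius `O(α)` around `x*`. -/
theorem finite_time_bound_constant_stepsize_smooth_exponential
    {E : Type*} [NormedAddCommGroup E] [InnerProductSpace ℝ E] [FiniteDimensional ℝ E]
    [MeasurableSpace E] [BorelSpace E]
    {Ω : Type*} {m0 : MeasurableSpace Ω} {P : Measure Ω} [IsProbabilityMeasure P]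
    (ℱ : Filtration ℕ m0)
    (xstar x0 : E)
    (F : E → E) (C : ℝ) (hFstar : F xstar = 0)
    (hF : ∀ y z, ‖F y - F z‖ ≤ C * ‖y - z‖)
    (V : E → ℝ) (hVnonneg : ∀ y, 0 ≤ V y) (hVdiff : Differentiable ℝ V)
    (L γ C₁ C₂ : ℝ) (hL : 0 < L) (hγ : 0 < γ) (hC₁ : 0 < C₁) (hC₂ : 0 < C₂)
    (hsmooth : ∀ y z, V z ≤ V y + ⟪gradient V y, z - y⟫ + (L / 2) * ‖z - y‖ ^ 2)
    (hdrift : ∀ y, ⟪gradient V y, F y⟫ ≤ -γ * V y)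
    (hgrow : ∀ y, C₁ * ‖y - xstar‖ ^ 2 ≤ V y ∧ V y ≤ C₂ * ‖y - xstar‖ ^ 2)
    (x w : ℕ → Ω → E) (α : ℝ) (hα : 0 < α)
    (hx0 : ∀ ω, x 0 ω = x0)
    (hadapted : Adapted ℱ x)
    (hxL2 : ∀ k, MemLp (x k) 2 P)
    (hwL2 : ∀ k, MemLp (w k) 2 P)
    (A B : ℝ) (hA : 0 ≤ A) (hB : 0 ≤ B)
    (hw_mean : ∀ k, P[w k | ℱ k] =ᵐ[P] 0)
    (hw_var : ∀ k, ∀ᵐ ω ∂P,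
      (P[fun ω' => ‖w k ω'‖ ^ 2 | ℱ k]) ω ≤ A + B * ‖x k ω‖ ^ 2)
    (hrec : ∀ k ω, x (k + 1) ω = x k ω + α • (F (x k ω) + w k ω))
    (hstep : α * L * (C ^ 2 + 2 * B) / C₁ ≤ γ / 2) (hαγ : α * γ ≤ 2) :
    ∀ k, (∫ ω, ‖x k ω - xstar‖ ^ 2 ∂P) ≤
      (C₂ / C₁) * ‖x0 - xstar‖ ^ 2 * (1 - α * γ / 2) ^ k +
        2 * α * L * (A + 2 * B * ‖xstar‖ ^ 2) / (γ * C₁) := by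
  -- basic continuity / measurability facts
  have hVcont : Continuous V := hVdiff.continuous
  have hFcont : Continuous F := by
    refine (LipschitzWith.of_dist_le_mul (K := C.toNNReal) fun y z => ?_).continuous
    have h1 := hF y z
    have h2 : (0:ℝ) ≤ ‖F y - F z‖ := norm_nonneg _
    have h3 : C * ‖y - z‖ ≤ C.toNNReal * ‖y - z‖ :=
      mul_le_mul_of_nonneg_right (Real.le_coe_toNNReal C) (norm_nonneg _)
    simpa [dist_eq_norm] using h1.trans h3
  have hgradmeas : Measurable (gradient V) := by
    have : Measurable (fderiv ℝ V) := measurable_fderiv ℝ V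
    exact ((InnerProductSpace.toDual ℝ E).symm.continuous.measurable).comp this
  -- gradient bound from smoothness
  have hgradsq : ∀ y, ‖gradient V y‖ ^ 2 ≤ 2 * L * V y := by
    intro y
    have h1 := hsmooth y (y - (L⁻¹) • gradient V y)
    have h2 := hVnonneg (y - (L⁻¹) • gradient V y)
    have h3 : y - (L⁻¹) • gradient V y - y = (-(L⁻¹)) • gradient V y := by
      rw [sub_sub_cancel_left, ← neg_smul]
    rw [h3] at h1
    have h4 : ⟪gradient V y, (-(L⁻¹)) • gradient V y⟫ = -(L⁻¹) * ‖gradient V y‖ ^ 2 := by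
      rw [real_inner_smul_right, real_inner_self_eq_norm_sq]
    have h5 : ‖(-(L⁻¹)) • gradient V y‖ ^ 2 = (L⁻¹)^2 * ‖gradient V y‖ ^ 2 := by
      rw [norm_smul, mul_pow]; simp [sq_abs]
    rw [h4, h5] at h1
    have e1 : L / 2 * ((L⁻¹) ^ 2 * ‖gradient V y‖ ^ 2) = L⁻¹ / 2 * ‖gradient V y‖ ^ 2 := by
      field_simp
    rw [e1] at h1
    have key : L⁻¹ / 2 * ‖gradient V y‖ ^ 2 ≤ V y := by linarith
    calc ‖gradient V y‖ ^ 2 = 2 * L * (L⁻¹ / 2 * ‖gradient V y‖ ^ 2) := by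
          field_simp
      _ ≤ 2 * L * V y := by
          have h2L : (0:ℝ) ≤ 2 * L := by linarith
          exact mul_le_mul_of_nonneg_left key h2L
  -- per-k objects and facts
  have hmle : ∀ k, ℱ k ≤ m0 := fun k => ℱ.le k
  have hXsm : ∀ k, StronglyMeasurable[ℱ k] (x k) := fun k => (hadapted k).stronglyMeasurable
  have hXmeas : ∀ k, Measurable (x k) := fun k => ((hXsm k).mono (hmle k)).measurable
  have hXaem : ∀ k, AEStronglyMeasurable (x k) P := fun k =>
    ((hXsm k).mono (hmle k)).aestronglyMeasurable
  have hXc : ∀ k, MemLp (fun ω => x k ω - xstar) 2 P := fun k =>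
    (hxL2 k).sub (memLp_const xstar)
  have hnint : ∀ k, Integrable (fun ω => ‖x k ω - xstar‖ ^ 2) P := fun k =>
    (hXc k).norm.integrable_sq
  have hVx_int : ∀ k, Integrable (fun ω => V (x k ω)) P := by
    intro k
    refine Integrable.mono' ((hnint k).const_mul C₂)
      (hVcont.comp_aestronglyMeasurable (hXaem k)) ?_
    filter_upwards with ω
    rw [Real.norm_of_nonneg (hVnonneg _)]
    exact (hgrow _).2
  have he_nonneg : ∀ k, 0 ≤ ∫ ω, V (x k ω) ∂P := fun k =>
    integral_nonneg fun ω => hVnonneg _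
  have hn_nonneg : ∀ k, 0 ≤ ∫ ω, ‖x k ω - xstar‖ ^ 2 ∂P := fun k =>
    integral_nonneg fun ω => sq_nonneg _
  have hn_le : ∀ k, C₁ * (∫ ω, ‖x k ω - xstar‖ ^ 2 ∂P) ≤ ∫ ω, V (x k ω) ∂P := by
    intro k
    rw [← integral_const_mul]
    exact integral_mono ((hnint k).const_mul C₁) (hVx_int k) fun ω => (hgrow _).1
  -- L2 of F ∘ x k
  have hFbound : ∀ y, ‖F y‖ ≤ C * ‖y - xstar‖ := by
    intro y
    have := hF y xstar
    simpa [hFstar] using this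
  have hFL2 : ∀ k, MemLp (fun ω => F (x k ω)) 2 P := by
    intro k
    refine MemLp.of_le ((hXc k).norm.const_mul C)
      (hFcont.comp_aestronglyMeasurable (hXaem k)) ?_
    filter_upwards with ω
    exact (hFbound _).trans (le_abs_self _)
  -- L2 of gradient ∘ x k
  have hGL2 : ∀ k, MemLp (fun ω => gradient V (x k ω)) 2 P := by
    intro k
    refine MemLp.of_le ((hXc k).norm.const_mul (Real.sqrt (2 * L * C₂)))
      ((hgradmeas.comp (hXmeas k)).aestronglyMeasurable) ?_
    filter_upwards with ω
    have h1 : ‖gradient V (x k ω)‖ ^ 2 ≤ 2 * L * C₂ * ‖x k ω - xstar‖ ^ 2 := by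
      have := hgradsq (x k ω)
      have := (hgrow (x k ω)).2
      nlinarith
    have h2 : ‖gradient V (x k ω)‖ ≤ Real.sqrt (2 * L * C₂) * ‖x k ω - xstar‖ := by
      have hb : (0:ℝ) ≤ Real.sqrt (2 * L * C₂) * ‖x k ω - xstar‖ := by positivity
      have hsq : (Real.sqrt (2 * L * C₂) * ‖x k ω - xstar‖) ^ 2
          = 2 * L * C₂ * ‖x k ω - xstar‖ ^ 2 := by
        rw [mul_pow, Real.sq_sqrt (by positivity)]
      calc ‖gradient V (x k ω)‖ = Real.sqrt (‖gradient V (x k ω)‖ ^ 2) :=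
            (Real.sqrt_sq (norm_nonneg _)).symm
        _ ≤ Real.sqrt ((Real.sqrt (2 * L * C₂) * ‖x k ω - xstar‖) ^ 2) :=
            Real.sqrt_le_sqrt (by rw [hsq]; exact h1)
        _ = _ := Real.sqrt_sq hb
    exact h2.trans (le_abs_self _)
  have hGsm : ∀ k, StronglyMeasurable[ℱ k] (fun ω => gradient V (x k ω)) := fun k =>
    (hgradmeas.comp (hXsm k).measurable).stronglyMeasurable
  -- second moment of w k
  have hwsq_int : ∀ k, Integrable (fun ω => ‖w k ω‖ ^ 2) P := fun k =>
    (hwL2 k).norm.integrable_sq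
  have hxsq_int : ∀ k, Integrable (fun ω => ‖x k ω‖ ^ 2) P := fun k =>
    (hxL2 k).norm.integrable_sq
  have hwsq : ∀ k, (∫ ω, ‖w k ω‖ ^ 2 ∂P) ≤ A + B * ∫ ω, ‖x k ω‖ ^ 2 ∂P := by
    intro k
    have h1 : (∫ ω, ‖w k ω‖ ^ 2 ∂P)
        = ∫ ω, (P[fun ω' => ‖w k ω'‖ ^ 2|ℱ k]) ω ∂P := (integral_condExp (hmle k)).symm
    have h2 : (∫ ω, (P[fun ω' => ‖w k ω'‖ ^ 2|ℱ k]) ω ∂P)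
        ≤ ∫ ω, A + B * ‖x k ω‖ ^ 2 ∂P :=
      integral_mono_ae integrable_condExp
        ((integrable_const A).add ((hxsq_int k).const_mul B)) (hw_var k)
    have h3 : (∫ ω, A + B * ‖x k ω‖ ^ 2 ∂P) = A + B * ∫ ω, ‖x k ω‖ ^ 2 ∂P := by
      rw [integral_add (integrable_const A) ((hxsq_int k).const_mul B),
        integral_const, integral_const_mul]
      simp
    rw [h1]
    exact h2.trans_eq h3
  have hxsq : ∀ k, (∫ ω, ‖x k ω‖ ^ 2 ∂P)
      ≤ 2 * (∫ ω, ‖x k ω - xstar‖ ^ 2 ∂P) + 2 * ‖xstar‖ ^ 2 := by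
    intro k
    have h1 : ∀ ω, ‖x k ω‖ ^ 2 ≤ 2 * ‖x k ω - xstar‖ ^ 2 + 2 * ‖xstar‖ ^ 2 := by
      intro ω
      have h2 : ‖x k ω‖ ≤ ‖x k ω - xstar‖ + ‖xstar‖ := by
        calc ‖x k ω‖ = ‖x k ω - xstar + xstar‖ := by rw [sub_add_cancel]
          _ ≤ _ := norm_add_le _ _
      nlinarith [norm_nonneg (x k ω), norm_nonneg (x k ω - xstar), norm_nonneg xstar,
        sq_nonneg (‖x k ω - xstar‖ - ‖xstar‖)]
    have hI2 : Integrable (fun ω => 2 * ‖x k ω - xstar‖ ^ 2 + 2 * ‖xstar‖ ^ 2) P :=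
      ((hnint k).const_mul 2).add (integrable_const _)
    have h9 := integral_mono (hxsq_int k) hI2 h1
    rwa [integral_add ((hnint k).const_mul 2) (integrable_const _),
      integral_const_mul, integral_const, probReal_univ,
      one_smul] at h9
  -- the martingale term vanishes
  have hmart : ∀ k, (∫ ω, ⟪gradient V (x k ω), w k ω⟫ ∂P) = 0 := fun k =>
    integral_inner_zero_mean (hmle k) (hGsm k) (hGL2 k) (hwL2 k) (hw_mean k)
  -- main one-step recursion
  have hrec2 : ∀ k, (∫ ω, V (x (k + 1) ω) ∂P) ≤
      (1 - α * γ / 2) * (∫ ω, V (x k ω) ∂P) + L * α ^ 2 * (A + 2 * B * ‖xstar‖ ^ 2) := by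
    intro k
    -- pointwise smoothness bound
    have hpt : ∀ ω, V (x (k + 1) ω) ≤ V (x k ω)
        + α * ⟪gradient V (x k ω), F (x k ω)⟫
        + α * ⟪gradient V (x k ω), w k ω⟫
        + (L / 2) * α ^ 2 * ‖F (x k ω) + w k ω‖ ^ 2 := by
      intro ω
      have h1 := hsmooth (x k ω) (x (k + 1) ω)
      have h2 : x (k + 1) ω - x k ω = α • (F (x k ω) + w k ω) := by
        rw [hrec k ω]; abel
      rw [h2] at h1
      have h3 : ⟪gradient V (x k ω), α • (F (x k ω) + w k ω)⟫
          = α * ⟪gradient V (x k ω), F (x k ω)⟫ + α * ⟪gradient V (x k ω), w k ω⟫ := by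
        rw [real_inner_smul_right, inner_add_right]; ring
      have h4 : ‖α • (F (x k ω) + w k ω)‖ ^ 2 = α ^ 2 * ‖F (x k ω) + w k ω‖ ^ 2 := by
        rw [norm_smul, mul_pow]; simp [sq_abs]
      rw [h3, h4] at h1
      linarith
    -- integrability of pieces
    have hGF_int : Integrable (fun ω => ⟪gradient V (x k ω), F (x k ω)⟫) P :=
      myIntegrable_inner (hGL2 k) (hFL2 k)
    have hGW_int : Integrable (fun ω => ⟪gradient V (x k ω), w k ω⟫) P :=
      myIntegrable_inner (hGL2 k) (hwL2 k)
    have hFW_int : Integrable (fun ω => ‖F (x k ω) + w k ω‖ ^ 2) P :=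
      ((hFL2 k).add (hwL2 k)).norm.integrable_sq
    have hI_a : Integrable (fun ω => V (x k ω)
        + α * ⟪gradient V (x k ω), F (x k ω)⟫) P :=
      (hVx_int k).add (hGF_int.const_mul α)
    have hI_b : Integrable (fun ω => V (x k ω)
        + α * ⟪gradient V (x k ω), F (x k ω)⟫
        + α * ⟪gradient V (x k ω), w k ω⟫) P :=
      hI_a.add (hGW_int.const_mul α)
    have hrhs_int : Integrable (fun ω => V (x k ω)
        + α * ⟪gradient V (x k ω), F (x k ω)⟫
        + α * ⟪gradient V (x k ω), w k ω⟫
        + (L / 2) * α ^ 2 * ‖F (x k ω) + w k ω‖ ^ 2) P :=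
      hI_b.add (hFW_int.const_mul _)
    have hint1 := integral_mono (hVx_int (k + 1)) hrhs_int hpt
    have hsplit : (∫ ω, (V (x k ω)
        + α * ⟪gradient V (x k ω), F (x k ω)⟫
        + α * ⟪gradient V (x k ω), w k ω⟫
        + (L / 2) * α ^ 2 * ‖F (x k ω) + w k ω‖ ^ 2) ∂P)
        = (∫ ω, V (x k ω) ∂P) + α * (∫ ω, ⟪gradient V (x k ω), F (x k ω)⟫ ∂P)
          + α * (∫ ω, ⟪gradient V (x k ω), w k ω⟫ ∂P)
          + (L / 2) * α ^ 2 * (∫ ω, ‖F (x k ω) + w k ω‖ ^ 2 ∂P) := by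
      rw [integral_add hI_b (hFW_int.const_mul _),
        integral_add hI_a (hGW_int.const_mul α),
        integral_add (hVx_int k) (hGF_int.const_mul α),
        integral_const_mul, integral_const_mul, integral_const_mul]
    rw [hsplit, hmart k] at hint1
    -- drift bound
    have hdrift_int : (∫ ω, ⟪gradient V (x k ω), F (x k ω)⟫ ∂P)
        ≤ -γ * ∫ ω, V (x k ω) ∂P := by
      rw [← integral_const_mul]
      exact integral_mono hGF_int ((hVx_int k).const_mul _) fun ω => hdrift _
    -- norm bound
    have hFWsq : (∫ ω, ‖F (x k ω) + w k ω‖ ^ 2 ∂P)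
        ≤ 2 * C ^ 2 * (∫ ω, ‖x k ω - xstar‖ ^ 2 ∂P) + 2 * (∫ ω, ‖w k ω‖ ^ 2 ∂P) := by
      have hpt2 : ∀ ω, ‖F (x k ω) + w k ω‖ ^ 2
          ≤ 2 * C ^ 2 * ‖x k ω - xstar‖ ^ 2 + 2 * ‖w k ω‖ ^ 2 := by
        intro ω
        have h5 : ‖F (x k ω) + w k ω‖ ≤ ‖F (x k ω)‖ + ‖w k ω‖ := norm_add_le _ _
        have h6 := hFbound (x k ω)
        have h7 : ‖F (x k ω) + w k ω‖ ≤ C * ‖x k ω - xstar‖ + ‖w k ω‖ := by linarith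
        have h8 : ‖F (x k ω) + w k ω‖ ^ 2 ≤ (C * ‖x k ω - xstar‖ + ‖w k ω‖) ^ 2 :=
          pow_le_pow_left₀ (norm_nonneg _) h7 2
        nlinarith [h8, sq_nonneg (C * ‖x k ω - xstar‖ - ‖w k ω‖)]
      have hI3 : Integrable (fun ω => 2 * C ^ 2 * ‖x k ω - xstar‖ ^ 2
          + 2 * ‖w k ω‖ ^ 2) P :=
        ((hnint k).const_mul (2 * C ^ 2)).add ((hwsq_int k).const_mul 2)
      have h9 := integral_mono hFW_int hI3 hpt2
      rwa [integral_add ((hnint k).const_mul (2 * C ^ 2)) ((hwsq_int k).const_mul 2),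
        integral_const_mul, integral_const_mul] at h9
    -- assemble
    set ek := ∫ ω, V (x k ω) ∂P with hek
    set nk := ∫ ω, ‖x k ω - xstar‖ ^ 2 ∂P with hnk
    have hnk_le : C₁ * nk ≤ ek := hn_le k
    have hek0 : 0 ≤ ek := he_nonneg k
    have hnk0 : 0 ≤ nk := hn_nonneg k
    have hw2 := hwsq k
    have hx2 := hxsq k
    have hstep' : α * L * (C ^ 2 + 2 * B) ≤ γ / 2 * C₁ := by
      rw [div_le_iff₀ hC₁] at hstep
      linarith
    have main1 : (∫ ω, V (x (k + 1) ω) ∂P) ≤ ek + α * (-γ * ek)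
        + (L / 2) * α ^ 2 * (2 * C ^ 2 * nk
          + 2 * (A + B * (2 * nk + 2 * ‖xstar‖ ^ 2))) := by
      have s1 := mul_le_mul_of_nonneg_left hdrift_int hα.le
      have s2 := mul_le_mul_of_nonneg_left hx2 hB
      have s3 : (∫ ω, ‖w k ω‖ ^ 2 ∂P) ≤ A + B * (2 * nk + 2 * ‖xstar‖ ^ 2) := by
        linarith
      have s4 : (∫ ω, ‖F (x k ω) + w k ω‖ ^ 2 ∂P) ≤ 2 * C ^ 2 * nk
          + 2 * (A + B * (2 * nk + 2 * ‖xstar‖ ^ 2)) := by linarith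
      have s5 := mul_le_mul_of_nonneg_left s4
        (show (0:ℝ) ≤ (L / 2) * α ^ 2 by positivity)
      linarith
    have t1 : (α * L * (C ^ 2 + 2 * B)) * (α * nk) ≤ (γ / 2 * C₁) * (α * nk) :=
      mul_le_mul_of_nonneg_right hstep' (mul_nonneg hα.le hnk0)
    have t2 : (α * γ / 2) * (C₁ * nk) ≤ (α * γ / 2) * ek :=
      mul_le_mul_of_nonneg_left hnk_le (by positivity)
    have e1 : (α * L * (C ^ 2 + 2 * B)) * (α * nk) = L * α ^ 2 * (C ^ 2 + 2 * B) * nk := by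
      ring
    have e2 : (γ / 2 * C₁) * (α * nk) = (α * γ / 2) * (C₁ * nk) := by ring
    rw [e1, e2] at t1
    have u1 : L * α ^ 2 * (C ^ 2 + 2 * B) * nk ≤ (α * γ / 2) * ek := t1.trans t2
    have e3 : ek + α * (-γ * ek) + (L / 2) * α ^ 2 * (2 * C ^ 2 * nk
          + 2 * (A + B * (2 * nk + 2 * ‖xstar‖ ^ 2)))
        = (1 - α * γ) * ek + L * α ^ 2 * (C ^ 2 + 2 * B) * nk
          + L * α ^ 2 * (A + 2 * B * ‖xstar‖ ^ 2) := by ring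
    rw [e3] at main1
    linarith
  -- geometric recursion
  have hq0 : 0 ≤ 1 - α * γ / 2 := by linarith
  have hq1 : 1 - α * γ / 2 < 1 := by nlinarith [mul_pos hα hγ]
  have hc0 : 0 ≤ L * α ^ 2 * (A + 2 * B * ‖xstar‖ ^ 2) := by positivity
  have hgeo : ∀ k, (∫ ω, V (x k ω) ∂P) ≤ (1 - α * γ / 2) ^ k * (∫ ω, V (x 0 ω) ∂P)
      + L * α ^ 2 * (A + 2 * B * ‖xstar‖ ^ 2) / (1 - (1 - α * γ / 2)) :=
    geo_rec (fun k => ∫ ω, V (x k ω) ∂P) (1 - α * γ / 2)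
      (L * α ^ 2 * (A + 2 * B * ‖xstar‖ ^ 2)) hq0 hq1 hc0 hrec2
  -- initial value
  have he0 : (∫ ω, V (x 0 ω) ∂P) = V x0 := by
    simp only [hx0]
    simp
  intro k
  have h1 : (∫ ω, ‖x k ω - xstar‖ ^ 2 ∂P) ≤ (∫ ω, V (x k ω) ∂P) / C₁ :=
    (le_div_iff₀' hC₁).2 (hn_le k)
  have h2 := hgeo k
  rw [he0] at h2
  have h3 : V x0 ≤ C₂ * ‖x0 - xstar‖ ^ 2 := (hgrow x0).2
  have hqk : 0 ≤ (1 - α * γ / 2) ^ k := pow_nonneg hq0 k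
  have h4 : (∫ ω, V (x k ω) ∂P) ≤ (1 - α * γ / 2) ^ k * (C₂ * ‖x0 - xstar‖ ^ 2)
      + L * α ^ 2 * (A + 2 * B * ‖xstar‖ ^ 2) / (1 - (1 - α * γ / 2)) := by
    have := mul_le_mul_of_nonneg_left h3 hqk
    linarith
  have h5 : L * α ^ 2 * (A + 2 * B * ‖xstar‖ ^ 2) / (1 - (1 - α * γ / 2))
      = 2 * α * L * (A + 2 * B * ‖xstar‖ ^ 2) / γ := by
    have h6 : 1 - (1 - α * γ / 2) = α * γ / 2 := by ring
    rw [h6, div_eq_div_iff (by positivity) hγ.ne']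
    ring
  rw [h5] at h4
  have h7 : (∫ ω, V (x k ω) ∂P) / C₁
      ≤ ((1 - α * γ / 2) ^ k * (C₂ * ‖x0 - xstar‖ ^ 2)
        + 2 * α * L * (A + 2 * B * ‖xstar‖ ^ 2) / γ) / C₁ := by
    exact (div_le_div_iff_of_pos_right hC₁).2 h4
  refine h1.trans (h7.trans_eq ?_)
  ring
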